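/- In sl(2,ℝ) with basis e₁,e₂,e₃ satisfying [e₁,e₂]=e₃, [e₂,e₃]=e₁, [e₃,e₁]=-e₂, and π = 2 e₂∧e₃, an element X = a e₁ + b e₂ + c e₃ satisfies [X,[X,π]] = λ[X,π] for some λ ∈ ℝ if and only if X lies in span{e₁, e₂+e₃} or in span{e₁, e₂-e₃} (equivalently, b² = c²) or [X,π]=0. -/

import Mathlib

open ExteriorAlgebra

/-- Auxiliary data packaging the Schouten bracket operations on the exterior algebra
`⋀• g` of a Lie algebra `g`, characterized by their values on decomposable elements:
* `bv X` is the Schouten bracket `[X, ·]` with an element of `g`, i.e. the unique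
  derivation of `⋀• g` extending `ad X`;
* `sb` is the Schouten bracket `[·,·] : ⋀² g × ⋀² g → ⋀³ g`;
* `pair ξ η` is the pairing of `ξ ∧ η ∈ ⋀² g*` with `⋀² g`;
* `sharp η ξ = ι_ξ η` is contraction of `η ∈ ⋀² g` with a covector `ξ`. -/
structure SchoutenData (R : Type*) [Field R] (L : Type*) [LieRing L] [LieAlgebra R L] where
  bv : L →ₗ[R] ExteriorAlgebra R L →ₗ[R] ExteriorAlgebra R L
  sb : ExteriorAlgebra R L →ₗ[R] ExteriorAlgebra R L →ₗ[R] ExteriorAlgebra R L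
  pair : Module.Dual R L →ₗ[R] Module.Dual R L →ₗ[R] ExteriorAlgebra R L →ₗ[R] R
  sharp : ExteriorAlgebra R L →ₗ[R] Module.Dual R L →ₗ[R] L
  bv_wedge2 : ∀ X u v : L, bv X (ιMulti R 2 ![u, v]) =
    ιMulti R 2 ![⁅X, u⁆, v] + ιMulti R 2 ![u, ⁅X, v⁆]
  bv_wedge3 : ∀ X u v t : L, bv X (ιMulti R 3 ![u, v, t]) =
    ιMulti R 3 ![⁅X, u⁆, v, t] + ιMulti R 3 ![u, ⁅X, v⁆, t] + ιMulti R 3 ![u, v, ⁅X, t⁆]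
  sb_wedge : ∀ u v x y : L, sb (ιMulti R 2 ![u, v]) (ιMulti R 2 ![x, y]) =
    ιMulti R 3 ![⁅u, x⁆, v, y] + ιMulti R 3 ![u, ⁅v, x⁆, y]
      - ιMulti R 3 ![x, ⁅u, y⁆, v] - ιMulti R 3 ![x, u, ⁅v, y⁆]
  pair_wedge : ∀ (ξ η : Module.Dual R L) (u v : L),
    pair ξ η (ιMulti R 2 ![u, v]) = ξ u * η v - ξ v * η u
  sharp_wedge : ∀ (u v : L) (ξ : Module.Dual R L),
    sharp (ιMulti R 2 ![u, v]) ξ = ξ u • v - ξ v • u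

section Aux

open ExteriorAlgebra

private lemma wedge2_eq {L : Type*} [AddCommGroup L] [Module ℝ L] (u v : L) :
    ιMulti ℝ 2 ![u, v] = ι ℝ u * ι ℝ v := by
  simp [ιMulti_apply, List.ofFn_succ]

private lemma iota_swap {L : Type*} [AddCommGroup L] [Module ℝ L] (u v : L) :
    ι ℝ u * ι ℝ v = -(ι ℝ v * ι ℝ u) := by
  have h := ExteriorAlgebra.ι_add_mul_swap (R := ℝ) u v
  rw [eq_neg_iff_add_eq_zero]; exact h

private lemma exists_dual {L : Type*} [AddCommGroup L] [Module ℝ L]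
    (v : Fin 3 → L) (hind : LinearIndependent ℝ v) :
    ∃ φ : Fin 3 → Module.Dual ℝ L, ∀ i j, φ i (v j) = if i = j then 1 else 0 := by
  set p : Submodule ℝ L := Submodule.span ℝ (Set.range v) with hp
  let B : Module.Basis (Fin 3) ℝ p := Module.Basis.span hind
  have hext : ∀ i : Fin 3, ∃ g : L →ₗ[ℝ] ℝ, g ∘ₗ p.subtype = B.coord i := fun i =>
    LinearMap.exists_extend _
  choose φ hφ using hext
  refine ⟨φ, fun i j => ?_⟩
  have hmem : v j ∈ p := Submodule.subset_span ⟨j, rfl⟩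
  have hBj : B j = ⟨v j, hmem⟩ := by
    ext; exact congrArg Subtype.val (Module.Basis.span_apply hind j)
  have h1 : φ i (p.subtype ⟨v j, hmem⟩) = B.coord i ⟨v j, hmem⟩ := by
    rw [← hφ i]; rfl
  have h2 : B.coord i ⟨v j, hmem⟩ = if i = j then 1 else 0 := by
    rw [← hBj, Module.Basis.coord_apply, Module.Basis.repr_self, Finsupp.single_apply]
    by_cases hij : i = j <;> simp [hij, eq_comm]
  simpa [h2] using h1

end Aux

set_option maxHeartbeats 1000000 in
/-- In `sl(2,ℝ)` with basis `e₁,e₂,e₃` (`[e₁,e₂]=e₃, [e₂,e₃]=e₁,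
[e₃,e₁]=-e₂`) and `π = 2 e₂∧e₃`, the element `X = a e₁ + b e₂ + c e₃` satisfies
`[X,[X,π]] = λ [X,π]` for some `λ ∈ ℝ` iff `b² = c²` (i.e. `X` lies in
`span{e₁, e₂+e₃}` or `span{e₁, e₂-e₃}`) or `[X,π] = 0`. -/

theorem sl2_condi_iff
    {L : Type*} [LieRing L] [LieAlgebra ℝ L] (S : SchoutenData ℝ L)
    (e₁ e₂ e₃ : L) (hind : LinearIndependent ℝ ![e₁, e₂, e₃])
    (h12 : ⁅e₁, e₂⁆ = e₃) (h23 : ⁅e₂, e₃⁆ = e₁) (h31 : ⁅e₃, e₁⁆ = -e₂)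
    (a b c : ℝ) :
    (∃ lam : ℝ,
        S.bv (a • e₁ + b • e₂ + c • e₃)
            (S.bv (a • e₁ + b • e₂ + c • e₃) ((2 : ℝ) • ιMulti ℝ 2 ![e₂, e₃])) =
          lam • S.bv (a • e₁ + b • e₂ + c • e₃) ((2 : ℝ) • ιMulti ℝ 2 ![e₂, e₃])) ↔
      (b ^ 2 = c ^ 2 ∨
        S.bv (a • e₁ + b • e₂ + c • e₃) ((2 : ℝ) • ιMulti ℝ 2 ![e₂, e₃]) = 0) := by
  set X : L := a • e₁ + b • e₂ + c • e₃ with hX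
  -- bracket relations
  have h21 : ⁅e₂, e₁⁆ = -e₃ := by rw [← lie_skew, h12]
  have h32 : ⁅e₃, e₂⁆ = -e₁ := by rw [← lie_skew, h23]
  have h13 : ⁅e₁, e₃⁆ = e₂ := by rw [← lie_skew, h31, neg_neg]
  have hXe1 : ⁅X, e₁⁆ = (-c) • e₂ + (-b) • e₃ := by
    simp only [hX, add_lie, smul_lie, h21, h31, lie_self, smul_zero]
    module
  have hXe2 : ⁅X, e₂⁆ = (-c) • e₁ + a • e₃ := by
    simp only [hX, add_lie, smul_lie, h12, h32, lie_self, smul_zero]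
    module
  have hXe3 : ⁅X, e₃⁆ = b • e₁ + a • e₂ := by
    simp only [hX, add_lie, smul_lie, h13, h23, lie_self, smul_zero]
    module
  -- wedge products
  set E12 := ιMulti ℝ 2 ![e₁, e₂] with hE12
  set E13 := ιMulti ℝ 2 ![e₁, e₃] with hE13
  set E23 := ιMulti ℝ 2 ![e₂, e₃] with hE23
  have sw : ∀ u v : L, ι ℝ u * ι ℝ v = -(ι ℝ v * ι ℝ u) := iota_swap
  -- step 1 : [X, π]
  have h1 : S.bv X ((2 : ℝ) • E23) = (-(2*b)) • E12 + (-(2*c)) • E13 := by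
    rw [map_smul, hE23, S.bv_wedge2, hXe2, hXe3, hE12, hE13]
    rw [wedge2_eq, wedge2_eq, wedge2_eq, wedge2_eq]
    simp only [map_add, map_smul, add_mul, mul_add, smul_mul_assoc, mul_smul_comm,
      ι_sq_zero, smul_zero, add_zero, zero_add]
    rw [sw e₂ e₁]
    module
  -- step 2 : [X, [X, π]]
  have hb12 : S.bv X E12 = a • E13 + b • E23 := by
    rw [hE12, S.bv_wedge2, hXe1, hXe2, hE13, hE23]
    rw [wedge2_eq, wedge2_eq, wedge2_eq, wedge2_eq]
    simp only [map_add, map_smul, add_mul, mul_add, smul_mul_assoc, mul_smul_comm,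
      ι_sq_zero, smul_zero, add_zero, zero_add]
    rw [sw e₃ e₂]
    module
  have hb13 : S.bv X E13 = a • E12 + (-c) • E23 := by
    rw [hE13, S.bv_wedge2, hXe1, hXe3, hE12, hE23]
    rw [wedge2_eq, wedge2_eq, wedge2_eq, wedge2_eq]
    simp only [map_add, map_smul, add_mul, mul_add, smul_mul_assoc, mul_smul_comm,
      ι_sq_zero, smul_zero, add_zero, zero_add]
    module
  have h2 : S.bv X (S.bv X ((2 : ℝ) • E23)) =
      (2*c^2 - 2*b^2) • E23 + (-(2*a*b)) • E13 + (-(2*a*c)) • E12 := by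
    rw [h1, map_add, map_smul, map_smul, hb12, hb13]
    module
  constructor
  · rintro ⟨lam, hl⟩
    left
    rw [h2, h1] at hl
    obtain ⟨φ, hφ⟩ := exists_dual ![e₁, e₂, e₃] hind
    have p10 : φ 1 e₁ = 0 := by simpa using hφ 1 0
    have p11 : φ 1 e₂ = 1 := by simpa using hφ 1 1
    have p12 : φ 1 e₃ = 0 := by simpa using hφ 1 2
    have p20 : φ 2 e₁ = 0 := by simpa using hφ 2 0
    have p21 : φ 2 e₂ = 0 := by simpa using hφ 2 1
    have p22 : φ 2 e₃ = 1 := by simpa using hφ 2 2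
    have q12 : S.pair (φ 1) (φ 2) E12 = 0 := by
      rw [hE12, S.pair_wedge, p10, p11, p20, p21]; ring
    have q13 : S.pair (φ 1) (φ 2) E13 = 0 := by
      rw [hE13, S.pair_wedge, p10, p12, p20, p22]; ring
    have q23 : S.pair (φ 1) (φ 2) E23 = 1 := by
      rw [hE23, S.pair_wedge, p11, p12, p21, p22]; ring
    have hP := congrArg (S.pair (φ 1) (φ 2)) hl
    simp only [map_add, map_smul, q12, q13, q23, smul_eq_mul, mul_zero, mul_one,
      add_zero, zero_add] at hP
    nlinarith [hP]
  · rintro (hbc | hzero)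
    · have hfac : (b - c) * (b + c) = 0 := by nlinarith [hbc]
      rcases mul_eq_zero.mp hfac with h | h
      · have hb : b = c := by linarith
        refine ⟨a, ?_⟩
        rw [h2, h1, hb]
        module
      · have hb : b = -c := by linarith
        refine ⟨-a, ?_⟩
        rw [h2, h1, hb]
        module
    · exact ⟨0, by rw [hzero, map_zero, zero_smul]⟩
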